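/- Let a < b, a₀, b₀ ∈ (a,b), T > 0, and Δ := min(a₀ - a, b - a₀, b₀ - a, b - b₀) > 0. Let w : [0,T] → ℝ be continuous with w(0) = 0, t ∈ [0,T], y ∈ (a,b), and define recursively τ₀ = t and, given τ_n < T, τ_{n+1} as the first time r ∈ (τ_n, T] at which y + (w_r - w_t) + (accumulated jump corrections) hits {a, b} (set τ_{n+1} = T if no such time exists), where upon hitting a the trajectory jumps to a₀ and upon hitting b it jumps to b₀. Then whenever two consecutive barrier hitting times τ_n < τ_{n+1} < T occur, |w_{τ_{n+1}} - w_{τ_n}| ≥ Δ; consequently, the number of barrier hitting times before T is finite: there exists N ∈ ℕ with τ_n = T for all n ≥ N. -/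
import Mathlib


/-- Construction of the uncertainty-zone distance process: the trajectory
`y + (w_s - w_t) + (jump corrections)` restarts at `a₀` upon hitting `a` and at
`b₀` upon hitting `b`.  With `Δ = min(a₀-a, b-a₀, b₀-a, b-b₀) > 0`, between two
consecutive barrier hitting times `τ_n < τ_{n+1} < T` (with `n ≥ 1`) the driving
path satisfies `|w_{τ_{n+1}} - w_{τ_n}| ≥ Δ`; consequently only finitely many
barrier hitting times occur before `T`: there is `N` with `τ_n = T` for `n ≥ N`.
Here `c n` is the jump correction applied at time `τ_{n+1}`, and
`pre n = y + (w_{τ_{n+1}} - w_t) + Σ_{j<n} c j` is the position just before that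
jump. -/
theorem stmt18 (a b a0 b0 T t y Δ : ℝ) (hab : a < b)
    (ha0 : a0 ∈ Set.Ioo a b) (hb0 : b0 ∈ Set.Ioo a b) (hT : 0 < T)
    (hΔ : Δ = min (min (a0 - a) (b - a0)) (min (b0 - a) (b - b0)))
    (w : ℝ → ℝ) (hw : ContinuousOn w (Set.Icc 0 T)) (hw0 : w 0 = 0)
    (ht : t ∈ Set.Icc (0:ℝ) T) (hy : y ∈ Set.Ioo a b)
    (τ : ℕ → ℝ) (c : ℕ → ℝ)
    (hτ0 : τ 0 = t) (hτmono : Monotone τ)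
    (hτle : ∀ n, τ n ≤ T) (hτge : ∀ n, t ≤ τ n)
    (hstick : ∀ n, τ n = T → τ (n + 1) = T)
    (hhit : ∀ n, τ (n + 1) < T →
      (y + (w (τ (n + 1)) - w t) + ∑ j ∈ Finset.range n, c j = a ∧ c n = a0 - a) ∨
      (y + (w (τ (n + 1)) - w t) + ∑ j ∈ Finset.range n, c j = b ∧ c n = b0 - b)) :
    (∀ n, 1 ≤ n → τ (n + 1) < T → Δ ≤ |w (τ (n + 1)) - w (τ n)|) ∧
    ∃ N : ℕ, ∀ n, N ≤ n → τ n = T := by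
  obtain ⟨ha0a, ha0b⟩ := ha0
  obtain ⟨hb0a, hb0b⟩ := hb0
  have hΔ1 : Δ ≤ a0 - a := hΔ ▸ le_trans (min_le_left _ _) (min_le_left _ _)
  have hΔ2 : Δ ≤ b - a0 := hΔ ▸ le_trans (min_le_left _ _) (min_le_right _ _)
  have hΔ3 : Δ ≤ b0 - a := hΔ ▸ le_trans (min_le_right _ _) (min_le_left _ _)
  have hΔ4 : Δ ≤ b - b0 := hΔ ▸ le_trans (min_le_right _ _) (min_le_right _ _)
  have hΔpos : 0 < Δ := by
    rw [hΔ]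
    simp only [lt_min_iff]
    refine ⟨⟨by linarith, by linarith⟩, by linarith, by linarith⟩
  have key : ∀ n, 1 ≤ n → τ (n + 1) < T → Δ ≤ |w (τ (n + 1)) - w (τ n)| := by
    intro n hn hlt
    obtain ⟨m, rfl⟩ := Nat.exists_eq_add_of_le hn
    have hlt' : τ (1 + m) < T := lt_of_le_of_lt (hτmono (by omega)) hlt
    have h1 := hhit m (by simpa [Nat.add_comm] using hlt')
    have h2 := hhit (m + 1) (by simpa [Nat.add_comm] using hlt)
    rw [Finset.sum_range_succ] at h2
    rw [Nat.add_comm 1 m]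
    rcases h1 with ⟨h1p, h1c⟩ | ⟨h1p, h1c⟩ <;> rcases h2 with ⟨h2p, _⟩ | ⟨h2p, _⟩ <;>
      rw [h1c] at h2p
    · have hd : w (τ (m + 1 + 1)) - w (τ (m + 1)) = a - a0 := by linarith
      rw [hd, abs_of_nonpos (by linarith)]; linarith
    · have hd : w (τ (m + 1 + 1)) - w (τ (m + 1)) = b - a0 := by linarith
      rw [hd, abs_of_nonneg (by linarith)]; linarith
    · have hd : w (τ (m + 1 + 1)) - w (τ (m + 1)) = a - b0 := by linarith
      rw [hd, abs_of_nonpos (by linarith)]; linarith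
    · have hd : w (τ (m + 1 + 1)) - w (τ (m + 1)) = b - b0 := by linarith
      rw [hd, abs_of_nonneg (by linarith)]; linarith
  refine ⟨key, ?_⟩
  by_contra hcon
  push_neg at hcon
  have hall : ∀ n, τ n < T := by
    intro n
    obtain ⟨m, hm, hne⟩ := hcon n
    exact lt_of_le_of_lt (hτmono hm) (lt_of_le_of_ne (hτle m) hne)
  have huc : UniformContinuousOn w (Set.Icc 0 T) :=
    isCompact_Icc.uniformContinuousOn_of_continuous hw
  rw [Metric.uniformContinuousOn_iff] at huc
  obtain ⟨δ, hδpos, hδ⟩ := huc Δ hΔpos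
  have hmem : ∀ n, τ n ∈ Set.Icc (0 : ℝ) T :=
    fun n => ⟨le_trans ht.1 (hτge n), hτle n⟩
  have hgap : ∀ n, 1 ≤ n → δ ≤ τ (n + 1) - τ n := by
    intro n hn
    by_contra hlt
    push_neg at hlt
    have hd : dist (τ (n + 1)) (τ n) < δ := by
      rw [Real.dist_eq, abs_of_nonneg (by linarith [hτmono (Nat.le_succ n)])]
      linarith
    have := hδ _ (hmem (n + 1)) _ (hmem n) hd
    rw [Real.dist_eq] at this
    exact absurd (key n hn (hall (n + 1))) (not_le.mpr this)
  have hlb : ∀ k : ℕ, τ 1 + k * δ ≤ τ (k + 1) := by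
    intro k
    induction k with
    | zero => simp
    | succ k ih =>
      have := hgap (k + 1) (by omega)
      push_cast
      nlinarith
  obtain ⟨k, hk⟩ := exists_nat_gt ((T - τ 1) / δ)
  have : (T - τ 1) / δ * δ < k * δ := by
    exact mul_lt_mul_of_pos_right hk hδpos
  rw [div_mul_cancel₀ _ (ne_of_gt hδpos)] at this
  have := hlb k
  linarith [hτle (k + 1)]
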